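/- arXiv:1912.05348 — 8 statements merged into one kernel-verified Lean document; each statement's English description precedes it below -/
import Mathlib

section
/- For every nonzero rational number r, the real number sin r is irrational. -/
open Polynomial Complex Finset GaussianInt Filter
open scoped Nat

noncomputable section
namespace SinIrrAux

set_option maxHeartbeats 1000000

local notation "ℤI" => GaussianInt

/-- `ga a` is the Gaussian integer `a * I`. -/
def ga (a : ℤ) : ℤI := ⟨0, a⟩

/-- The Hermite auxiliary polynomial. -/
def phi (a : ℤ) (n : ℕ) : Polynomial ℤI :=
  X^(n-1) * ((X - C (ga a))^n * (X - C (2 * ga a))^n)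

/-- Weighted sums of iterated derivatives evaluated at `k * a * I`. -/
def Gs (a : ℤ) (b : ℕ) (n : ℕ) (k : ℕ) : ℤI :=
  ∑ j ∈ range (3*n+2), (b:ℤI)^j * ((derivative^[j] (phi a n)).eval ((k:ℤI) * ga a))

/-- The master Gaussian integer. -/
def Ndef (a p : ℤ) (b q n : ℕ) : ℤI :=
  -(q:ℤI) * Gs a b n 0 + (-(2*(p:ℤI)) * ⟨0,1⟩) * Gs a b n 1 + (q:ℤI) * Gs a b n 2

lemma phi_natDegree_le (a : ℤ) (n : ℕ) : (phi a n).natDegree ≤ 3*n := by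
  unfold phi
  refine natDegree_mul_le.trans ?_
  have h1 : (X^(n-1) : Polynomial ℤI).natDegree ≤ n := (natDegree_X_pow _).le.trans (by omega)
  have h2 := natDegree_pow_le (p := X - C (ga a)) (n := n)
  have h3 := natDegree_pow_le (p := X - C (2 * ga a)) (n := n)
  rw [natDegree_X_sub_C, mul_one] at h2 h3
  have := natDegree_mul_le (p := (X - C (ga a))^n) (q := (X - C (2 * ga a))^n)
  omega

lemma dvd_Gs_aux (a : ℤ) (b : ℕ) (n : ℕ) (k : ℕ) (hk : k = 1 ∨ k = 2) :
    ((n ! : ℤI)) ∣ Gs a b n k := by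
  apply Finset.dvd_sum
  intro j _
  rcases lt_or_ge j n with hj | hj
  · have hone : ((1:ℕ):ℤI) * ga a = ga a := by push_cast; ring
    have htwo : ((2:ℕ):ℤI) * ga a = 2 * ga a := by push_cast; ring
    rcases hk with rfl | rfl
    · have hp : (phi a n).map (algebraMap ℤI ℤI)
          = (X - C (((1:ℕ):ℤI) * ga a))^n * (X^(n-1) * (X - C (2 * ga a))^n) := by
        rw [Algebra.algebraMap_self, Polynomial.map_id, hone]; unfold phi; ring
      have h0 := aeval_iterate_derivative_of_lt (phi a n) n (((1:ℕ):ℤI) * ga a) hp hj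
      rw [coe_aeval_eq_eval] at h0
      rw [h0, mul_zero]
      exact dvd_zero _
    · have hp : (phi a n).map (algebraMap ℤI ℤI)
          = (X - C (((2:ℕ):ℤI) * ga a))^n * (X^(n-1) * (X - C (ga a))^n) := by
        rw [Algebra.algebraMap_self, Polynomial.map_id, htwo]; unfold phi; ring
      have h0 := aeval_iterate_derivative_of_lt (phi a n) n (((2:ℕ):ℤI) * ga a) hp hj
      rw [coe_aeval_eq_eval] at h0
      rw [h0, mul_zero]
      exact dvd_zero _
  · obtain ⟨gp, -, hgp⟩ := aeval_iterate_derivative_of_ge ℤI (phi a n) n hj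
    have h1 := hgp ((k:ℤI) * ga a)
    rw [coe_aeval_eq_eval] at h1
    rw [h1, nsmul_eq_mul]
    exact Dvd.dvd.mul_left (Dvd.intro _ rfl) _

lemma Gs_zero (a : ℤ) (b : ℕ) (n : ℕ) (hn : 1 ≤ n) :
    ∃ W : ℤI, Gs a b n 0
      = ((n-1)! : ℤI) * ((b:ℤI)^(n-1) * (2 * (ga a)^2)^n) + (n ! : ℤI) * W := by
  unfold Gs
  rw [Nat.cast_zero]
  have hmem : n - 1 ∈ range (3*n+2) := by simp; omega
  have hsplit := (Finset.add_sum_erase (range (3*n+2))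
    (fun j => (b:ℤI)^j * ((derivative^[j] (phi a n)).eval ((0:ℤI) * ga a))) hmem).symm
  have hp : (phi a n).map (algebraMap ℤI ℤI)
      = (X - C ((0:ℤI) * ga a))^(n-1) * ((X - C (ga a))^n * (X - C (2 * ga a))^n) := by
    rw [Algebra.algebraMap_self, Polynomial.map_id]
    have : (X - C ((0:ℤI) * ga a)) = (X : Polynomial ℤI) := by simp
    rw [this]; rfl
  have hmain := aeval_iterate_derivative_self (phi a n) (n-1) ((0:ℤI) * ga a) hp
  rw [coe_aeval_eq_eval] at hmain
  have hmainval : (derivative^[n-1] (phi a n)).eval ((0:ℤI) * ga a)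
      = ((n-1)! : ℤI) * (2 * (ga a)^2)^n := by
    rw [hmain, nsmul_eq_mul]
    congr 1
    rw [eval_mul, eval_pow, eval_pow, ← mul_pow]
    congr 1
    simp
    ring
  have hrest : ((n ! : ℤI)) ∣ ∑ j ∈ (range (3*n+2)).erase (n-1),
      (b:ℤI)^j * ((derivative^[j] (phi a n)).eval ((0:ℤI) * ga a)) := by
    apply Finset.dvd_sum
    intro j hj
    have hjne : j ≠ n - 1 := (Finset.mem_erase.1 hj).1
    rcases lt_or_ge j n with hjn | hjn
    · have hjlt : j < n - 1 := by omega
      have h0 := aeval_iterate_derivative_of_lt (phi a n) (n-1) ((0:ℤI) * ga a) hp hjlt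
      rw [coe_aeval_eq_eval] at h0
      rw [h0, mul_zero]
      exact dvd_zero _
    · obtain ⟨gp, -, hgp⟩ := aeval_iterate_derivative_of_ge ℤI (phi a n) n hjn
      have h1 := hgp ((0:ℤI) * ga a)
      rw [coe_aeval_eq_eval] at h1
      rw [h1, nsmul_eq_mul]
      exact Dvd.dvd.mul_left (Dvd.intro _ rfl) _
  obtain ⟨W, hW⟩ := hrest
  refine ⟨W, ?_⟩
  rw [hsplit, hmainval, hW]
  ring

lemma iterate_derivative_comp_C_mul_X {R : Type*} [CommSemiring R] (p : R[X]) (b : R) (j : ℕ) :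
    derivative^[j] (p.comp (C b * X)) = C (b^j) * ((derivative^[j] p).comp (C b * X)) := by
  induction j with
  | zero => simp
  | succ j ih =>
    rw [Function.iterate_succ_apply', ih, derivative_C_mul, derivative_comp,
      Function.iterate_succ_apply']
    simp [pow_succ]
    ring

lemma hermite_bound (g : ℂ[X]) (t : ℂ) (M : ℝ)
    (hM : ∀ u : ℝ, u ∈ Set.Icc (0:ℝ) 1 → ‖g.eval (t * u)‖ ≤ M) :
    ‖Complex.exp t * (sumIDeriv g).eval 0 - (sumIDeriv g).eval t‖
      ≤ ‖t‖ * Real.exp ‖t‖ * M := by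
  set F := sumIDeriv g with hF
  have hder : derivative F = F - g := by
    rw [hF]
    nth_rewrite 2 [sumIDeriv_eq_self_add g]
    ring
  set Φ : ℂ → ℂ := fun w => Complex.exp (t - t * w) * F.eval (t * w) with hΦ
  have hΦd : ∀ w : ℂ, HasDerivAt Φ (-(t * Complex.exp (t - t * w) * g.eval (t * w))) w := by
    intro w
    have h1 : HasDerivAt (fun w : ℂ => t - t * w) (-t) w := by
      simpa using ((hasDerivAt_id w).const_mul t).const_sub t
    have h2 : HasDerivAt (fun w : ℂ => Complex.exp (t - t * w))
        (Complex.exp (t - t * w) * (-t)) w := (Complex.hasDerivAt_exp _).comp w h1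
    have h3 : HasDerivAt (fun w : ℂ => t * w) t w := by
      simpa using (hasDerivAt_id w).const_mul t
    have h4 : HasDerivAt (fun w : ℂ => F.eval (t * w))
        ((derivative F).eval (t * w) * t) w := (F.hasDerivAt _).comp w h3
    have := h2.mul h4
    refine HasDerivAt.congr_deriv this ?_
    rw [hder]
    simp [eval_sub]
    ring
  have key : ∀ u : ℝ, HasDerivAt (fun u : ℝ => Φ u)
      (-(t * Complex.exp (t - t * u) * g.eval (t * u))) u :=
    fun u => (hΦd u).comp_ofReal
  have hcont : IntervalIntegrable
      (fun u : ℝ => -(t * Complex.exp (t - t * u) * g.eval (t * u)))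
      MeasureTheory.volume 0 1 := by
    apply Continuous.intervalIntegrable
    fun_prop
  have hftc := intervalIntegral.integral_eq_sub_of_hasDerivAt
      (f := fun u : ℝ => Φ u) (a := 0) (b := 1)
      (fun u _ => key u) hcont
  have hΦ1 : Φ (1 : ℝ) = F.eval t := by simp [hΦ]
  have hΦ0 : Φ (0 : ℝ) = Complex.exp t * F.eval 0 := by simp [hΦ]
  have hval : Complex.exp t * F.eval 0 - F.eval t
      = - ∫ u in (0:ℝ)..1, -(t * Complex.exp (t - t * u) * g.eval (t * u)) := by
    rw [hftc]
    show _ = -(Φ ((1:ℝ):ℂ) - Φ ((0:ℝ):ℂ))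
    rw [hΦ1, hΦ0]; ring
  rw [hval, norm_neg]
  have hb := intervalIntegral.norm_integral_le_of_norm_le_const
      (C := ‖t‖ * Real.exp ‖t‖ * M)
      (f := fun u : ℝ => -(t * Complex.exp (t - t * u) * g.eval (t * u)))
      (a := 0) (b := 1) ?_
  · simpa using hb
  · intro u hu
    rw [Set.uIoc_of_le (by norm_num : (0:ℝ) ≤ 1)] at hu
    have hu' : u ∈ Set.Icc (0:ℝ) 1 := ⟨hu.1.le, hu.2⟩
    rw [norm_neg, norm_mul, norm_mul]
    have he : ‖Complex.exp (t - t * u)‖ ≤ Real.exp ‖t‖ := by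
      rw [Complex.norm_exp]
      apply Real.exp_le_exp.2
      calc (t - t * u).re ≤ ‖(t - t*u : ℂ)‖ := Complex.re_le_norm _
        _ = ‖t‖ * ‖(1 - u : ℂ)‖ := by rw [← norm_mul]; ring_nf
        _ ≤ ‖t‖ * 1 := by
            apply mul_le_mul_of_nonneg_left _ (_root_.norm_nonneg t)
            rw [← Complex.ofReal_one, ← Complex.ofReal_sub, Complex.norm_real,
              Real.norm_eq_abs, abs_le]
            constructor <;> nlinarith [hu'.1, hu'.2]
        _ = ‖t‖ := mul_one _
    have hg := hM u hu'
    calc ‖t‖ * ‖Complex.exp (t - t*u)‖ * ‖g.eval (t*u)‖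
        ≤ ‖t‖ * Real.exp ‖t‖ * M := by
          apply mul_le_mul _ hg (_root_.norm_nonneg _) (by positivity)
          exact mul_le_mul_of_nonneg_left he (_root_.norm_nonneg t)

lemma toComplex_ga (a : ℤ) : ((ga a : ℤI) : ℂ) = (a:ℂ) * I := by
  simp [ga, toComplex_def']

lemma eval_sumIDeriv_eq (a : ℤ) (b n k : ℕ) (t : ℂ)
    (ht : (b:ℂ) * t = (k:ℂ) * ((a:ℂ) * I)) :
    (sumIDeriv (((phi a n).map toComplex).comp (C (b:ℂ) * X))).eval t
      = toComplex (Gs a b n k) := by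
  set f : ℂ[X] := ((phi a n).map toComplex).comp (C (b:ℂ) * X) with hf
  have hdeg : f.natDegree < 3*n+2 := by
    have h1 : f.natDegree ≤ ((phi a n).map toComplex).natDegree * (C (b:ℂ) * X).natDegree :=
      natDegree_comp_le
    have h2 : ((phi a n).map toComplex).natDegree ≤ 3*n :=
      natDegree_map_le.trans (phi_natDegree_le a n)
    have h3 : (C (b:ℂ) * X).natDegree ≤ 1 :=
      (natDegree_C_mul_le _ _).trans natDegree_X_le
    nlinarith
  rw [sumIDeriv_apply_of_lt hdeg, eval_finset_sum]
  have hpt : (toComplex ((k:ℤI) * ga a) : ℂ) = (b:ℂ) * t := by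
    rw [map_mul, toComplex_ga, ht, map_natCast]
  unfold Gs
  rw [map_sum]
  apply Finset.sum_congr rfl
  intro j _
  rw [hf, iterate_derivative_comp_C_mul_X, eval_mul, eval_C, eval_comp, eval_mul, eval_C,
    eval_X, iterate_derivative_map, map_mul, map_pow, map_natCast, ← hpt, eval_map,
    eval₂_at_apply]

lemma one_le_norm_toComplex (x : ℤI) (hx : x ≠ 0) : 1 ≤ ‖(toComplex x : ℂ)‖ := by
  have h1 : 0 < x.norm := GaussianInt.norm_pos.2 hx
  have h2 : (1:ℝ) ≤ Complex.normSq (toComplex x) := by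
    rw [← GaussianInt.intCast_real_norm]
    exact_mod_cast h1
  nlinarith [Complex.sq_norm (toComplex x), norm_nonneg (toComplex x)]

/-- The analytic upper bound for the Hermite quantity. -/
lemma Ebound (a : ℤ) (ha : a ≠ 0) (b n : ℕ) (t : ℂ) (R2 : ℝ) (hR2 : 0 < R2)
    (htR : ‖t‖ ≤ R2) (hbt : ‖(b:ℂ)*t‖ ≤ 2*(a.natAbs:ℝ)) :
    ‖Complex.exp t * (sumIDeriv (((phi a n).map toComplex).comp (C (b:ℂ) * X))).eval 0
        - (sumIDeriv (((phi a n).map toComplex).comp (C (b:ℂ) * X))).eval t‖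
      ≤ R2 * Real.exp R2 * ((4*(a.natAbs:ℝ))^3)^n := by
  set A : ℝ := (a.natAbs : ℝ) with hA_def
  have hA1 : (1:ℝ) ≤ A := by
    rw [hA_def]
    exact_mod_cast Nat.one_le_iff_ne_zero.2 (Int.natAbs_ne_zero.2 ha)
  set f : ℂ[X] := ((phi a n).map toComplex).comp (C (b:ℂ) * X) with hf_def
  have hfval : ∀ w : ℂ, f.eval w
      = ((b:ℂ)*w)^(n-1) * ((((b:ℂ)*w) - (a:ℂ)*I)^n * (((b:ℂ)*w) - 2*((a:ℂ)*I))^n) := by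
    intro w
    rw [hf_def, eval_comp, eval_mul, eval_C, eval_X]
    have h2 : toComplex 2 = 2 := by
      have : ((2:ℕ):ℤI) = (2:ℤI) := by push_cast; ring
      rw [← this, map_natCast]
      norm_num
    simp [phi, Polynomial.map_mul, Polynomial.map_pow, Polynomial.map_sub,
      toComplex_ga, eval_pow, eval_mul, eval_sub, h2]
  set Mn : ℝ := (2*A)^(n-1) * ((3*A)^n * (4*A)^n) with hMn_def
  have hMn_nonneg : 0 ≤ Mn := by positivity
  have hM : ∀ u : ℝ, u ∈ Set.Icc (0:ℝ) 1 → ‖f.eval (t * u)‖ ≤ Mn := by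
    intro u hu
    rw [hfval]
    have hbw : ‖(b:ℂ) * (t * u)‖ ≤ 2*A := by
      rw [show (b:ℂ) * (t * u) = ((b:ℂ)*t) * u by ring, norm_mul]
      have h2 : ‖((u:ℝ):ℂ)‖ ≤ 1 := by
        rw [Complex.norm_real, Real.norm_eq_abs, abs_le]
        exact ⟨by linarith [hu.1], hu.2⟩
      calc ‖(b:ℂ)*t‖ * ‖((u:ℝ):ℂ)‖ ≤ (2*A) * 1 := by
            apply mul_le_mul hbt h2 (_root_.norm_nonneg _) (by positivity)
        _ = 2*A := mul_one _
    have hnai : ‖(a:ℂ)*I‖ = A := by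
      rw [norm_mul, Complex.norm_I, mul_one, hA_def,
        show ((a:ℂ)) = ((a:ℝ):ℂ) by push_cast; ring, Complex.norm_real,
        Real.norm_eq_abs, Nat.cast_natAbs]
      simp
    set w := (b:ℂ) * (t * u) with hw_def
    have hx2 : ‖w - (a:ℂ)*I‖ ≤ 3*A := by
      calc ‖w - (a:ℂ)*I‖ ≤ ‖w‖ + ‖(a:ℂ)*I‖ := norm_sub_le _ _
        _ ≤ 2*A + A := by rw [hnai]; linarith [hbw]
        _ = 3*A := by ring
    have hx3 : ‖w - 2*((a:ℂ)*I)‖ ≤ 4*A := by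
      calc ‖w - 2*((a:ℂ)*I)‖ ≤ ‖w‖ + ‖(2:ℂ)‖*‖(a:ℂ)*I‖ := by
            rw [← norm_mul]; exact norm_sub_le _ _
        _ ≤ 2*A + 2*A := by
            rw [hnai]; simp only [Complex.norm_ofNat]; linarith [hbw]
        _ = 4*A := by ring
    rw [norm_mul, norm_mul, norm_pow, norm_pow, norm_pow, hMn_def]
    apply mul_le_mul
    · exact pow_le_pow_left₀ (_root_.norm_nonneg _) hbw _
    · apply mul_le_mul
      · exact pow_le_pow_left₀ (_root_.norm_nonneg _) hx2 _
      · exact pow_le_pow_left₀ (_root_.norm_nonneg _) hx3 _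
      · positivity
      · positivity
    · positivity
    · positivity
  have h := hermite_bound f t Mn hM
  refine h.trans ?_
  have hMnK : Mn ≤ ((4*A)^3)^n := by
    have h4A : (1:ℝ) ≤ 4*A := by linarith
    have e1 : (2*A)^(n-1) ≤ (4*A)^(n-1) :=
      pow_le_pow_left₀ (by linarith) (by linarith) _
    have e2 : (4*A)^(n-1) ≤ (4*A)^n := pow_le_pow_right₀ h4A (by omega)
    have e3 : (3*A)^n ≤ (4*A)^n := pow_le_pow_left₀ (by linarith) (by linarith) _
    have e5 : ((4*A)^3)^n = (4*A)^n * ((4*A)^n * (4*A)^n) := by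
      rw [← pow_mul]
      rw [show 3*n = n + (n + n) by ring, pow_add, pow_add]
    rw [hMn_def, e5]
    apply mul_le_mul (e1.trans e2) _ (by positivity) (by positivity)
    apply mul_le_mul e3 le_rfl (by positivity) (by positivity)
  have h1 : ‖t‖ * Real.exp ‖t‖ ≤ R2 * Real.exp R2 :=
    mul_le_mul htR (Real.exp_le_exp.2 htR) (Real.exp_pos _).le hR2.le
  calc ‖t‖ * Real.exp ‖t‖ * Mn ≤ (R2 * Real.exp R2) * ((4*A)^3)^n := by
        apply mul_le_mul h1 hMnK hMn_nonneg (by positivity)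
    _ = R2 * Real.exp R2 * ((4*A)^3)^n := by ring

/-- The arithmetic lower bound. -/
lemma N_lower (a p : ℤ) (b q n : ℕ) (hprime : n.Prime) (ha : a ≠ 0)
    (hb : 0 < b) (hq : 0 < q) (hnq : q < n) (hnb : b < n) (hn2 : 2 < n)
    (hna : a.natAbs < n) :
    ((n-1)! : ℝ) ≤ ‖(toComplex (Ndef a p b q n) : ℂ)‖ := by
  have hn1 : 1 ≤ n := hprime.one_lt.le
  obtain ⟨W0, hW0⟩ := Gs_zero a b n hn1
  obtain ⟨W1, hW1⟩ := dvd_Gs_aux a b n 1 (Or.inl rfl)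
  obtain ⟨W2, hW2⟩ := dvd_Gs_aux a b n 2 (Or.inr rfl)
  have hfact : (n ! : ℤI) = ((n-1)! : ℤI) * (n : ℤI) := by
    have h := Nat.mul_factorial_pred (show n ≠ 0 by omega)
    have h2 : n ! = (n-1)! * n := by rw [← h, Nat.mul_comm]
    exact_mod_cast congrArg (Nat.cast : ℕ → ℤI) h2
  have hga2 : (ga a)^2 = ((-(a^2) : ℤ) : ℤI) := by
    ext <;> simp [ga, pow_two, Zsqrtd.re_mul, Zsqrtd.im_mul] <;> ring
  set m0 : ℤ := -(q:ℤ) * (b:ℤ)^(n-1) * (2 * -(a^2))^n with hm0_def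
  have hmain : -(q:ℤI) * ((b:ℤI)^(n-1) * (2 * (ga a)^2)^n) = ((m0:ℤ) : ℤI) := by
    rw [hga2, hm0_def]
    push_cast
    ring
  set Wt : ℤI := -(q:ℤI)*W0 + (-(2*(p:ℤI)) * ⟨0,1⟩)*W1 + (q:ℤI)*W2 with hWt_def
  have hNfac : Ndef a p b q n = ((n-1)! : ℤI) * (((m0:ℤ):ℤI) + (n:ℤI) * Wt) := by
    rw [Ndef, hW0, hW1, hW2, hWt_def, ← hmain, hfact]
    ring
  set M : ℤI := ((m0:ℤ):ℤI) + (n:ℤI) * Wt with hM_def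
  have hM0 : M ≠ 0 := by
    intro h
    have hdvd : ((n:ℤ) : ℤI) ∣ ((m0:ℤ) : ℤI) := by
      refine ⟨-Wt, ?_⟩
      have : ((m0:ℤ):ℤI) = -((n:ℤI) * Wt) := by
        rw [← sub_eq_zero]
        rw [hM_def] at h
        linear_combination h
      rw [this]
      push_cast
      ring
    rw [Zsqrtd.intCast_dvd_intCast] at hdvd
    have hnat : n ∣ m0.natAbs := by
      have := Int.natAbs_dvd_natAbs.mpr hdvd
      simpa using this
    have hm0abs : m0.natAbs = q * (b^(n-1) * (2 * a.natAbs^2)^n) := by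
      simp [hm0_def, Int.natAbs_mul, Int.natAbs_pow, Int.natAbs_neg]
      ring
    rw [hm0abs] at hnat
    have habs0 : a.natAbs ≠ 0 := Int.natAbs_ne_zero.2 ha
    rcases (Nat.Prime.dvd_mul hprime).1 hnat with h1 | h1
    · exact absurd (Nat.le_of_dvd hq h1) (by omega)
    rcases (Nat.Prime.dvd_mul hprime).1 h1 with h2 | h2
    · have := Nat.Prime.dvd_of_dvd_pow hprime h2
      exact absurd (Nat.le_of_dvd hb this) (by omega)
    have h3 := Nat.Prime.dvd_of_dvd_pow hprime h2
    rcases (Nat.Prime.dvd_mul hprime).1 h3 with h4 | h4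
    · exact absurd (Nat.le_of_dvd (by norm_num) h4) (by omega)
    · have := Nat.Prime.dvd_of_dvd_pow hprime h4
      exact absurd (Nat.le_of_dvd (Nat.pos_of_ne_zero habs0) this) (by omega)
  have hlow : 1 ≤ ‖(toComplex M : ℂ)‖ := one_le_norm_toComplex M hM0
  rw [hNfac, map_mul, norm_mul]
  have hnf : ‖(toComplex ((n-1)! : ℤI) : ℂ)‖ = ((n-1)! : ℝ) := by
    rw [map_natCast]
    simp
  rw [hnf]
  nlinarith [Nat.cast_pos (α := ℝ) |>.2 (Nat.factorial_pos (n-1))]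

end SinIrrAux

namespace SinIrrAux

set_option maxHeartbeats 2000000

theorem main (r : ℚ) (hr : r ≠ 0) : Irrational (Real.sin (r : ℝ)) := by
  by_contra hirr
  obtain ⟨s, hs⟩ : ∃ s : ℚ, (s:ℝ) = Real.sin (r:ℝ) := by
    rw [Irrational, not_not] at hirr; exact hirr
  set a : ℤ := r.num with ha_def
  set b : ℕ := r.den with hb_def
  set p : ℤ := s.num with hp_def
  set q : ℕ := s.den with hq_def
  have ha : a ≠ 0 := Rat.num_ne_zero.2 hr
  have hb0 : 0 < b := r.pos
  have hq0 : 0 < q := s.pos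
  have hbr : (r:ℝ) * (b:ℝ) = (a:ℝ) := by
    have := Rat.mul_den_eq_num r
    exact_mod_cast congrArg (Rat.cast : ℚ → ℝ) this
  have hqs : (s:ℝ) * (q:ℝ) = (p:ℝ) := by
    have := Rat.mul_den_eq_num s
    exact_mod_cast congrArg (Rat.cast : ℚ → ℝ) this
  set z : ℂ := Complex.exp (((r:ℝ):ℂ) * I) with hz_def
  have hps : (q:ℂ) * Complex.sin (((r:ℝ):ℂ)) = (p:ℂ) := by
    rw [← Complex.ofReal_sin, ← hs]
    have h' : (q:ℝ) * (s:ℝ) = (p:ℝ) := by linarith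
    push_cast
    exact_mod_cast congrArg (Complex.ofReal) h'
  have hrel : (q:ℂ) * z^2 - 2*(p:ℂ)*I*z - (q:ℂ) = 0 := by
    have hw : z * Complex.exp (-(((r:ℝ):ℂ) * I)) = 1 := by
      rw [hz_def, ← Complex.exp_add]; simp
    have hz1 : z = Complex.cos (((r:ℝ):ℂ)) + Complex.sin (((r:ℝ):ℂ)) * I := by
      rw [hz_def, Complex.exp_mul_I]
    have hwv : Complex.exp (-(((r:ℝ):ℂ) * I))
        = Complex.cos (((r:ℝ):ℂ)) - Complex.sin (((r:ℝ):ℂ)) * I := by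
      have h' : -(((r:ℝ):ℂ)*I) = (-((r:ℝ):ℂ))*I := by ring
      rw [h', Complex.exp_mul_I, Complex.cos_neg, Complex.sin_neg]; ring
    linear_combination ((q:ℂ))*z*hz1 - (q:ℂ)*z*hwv + (q:ℂ)*hw + 2*I*z*hps
  -- constants
  set A : ℝ := (a.natAbs : ℝ) with hA_def
  have hA1 : (1:ℝ) ≤ A := by
    rw [hA_def]
    exact_mod_cast Nat.one_le_iff_ne_zero.2 (Int.natAbs_ne_zero.2 ha)
  have hrne : (r:ℝ) ≠ 0 := by exact_mod_cast hr
  set R2 : ℝ := 2 * |(r:ℝ)| with hR2_def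
  have hR2pos : 0 < R2 := by
    have := abs_pos.2 hrne
    rw [hR2_def]; linarith
  set C₁ : ℝ := (2*(q:ℝ) + 2*(p.natAbs:ℝ)) * (R2 * Real.exp R2) with hC₁_def
  have hC₁pos : 0 < C₁ := by
    have h1 : (0:ℝ) < 2*(q:ℝ) + 2*(p.natAbs:ℝ) := by
      have : (0:ℝ) < (q:ℝ) := by exact_mod_cast hq0
      positivity
    positivity
  set K : ℝ := (4*A)^3 with hK_def
  have hK1 : 1 ≤ K := by
    have h4 : (1:ℝ) ≤ 4*A := by linarith
    rw [hK_def]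
    exact one_le_pow₀ h4
  have hKpos : 0 < K := lt_of_lt_of_le one_pos hK1
  -- choose n
  obtain ⟨N₀, hN₀⟩ : ∃ N₀ : ℕ, ∀ m ≥ N₀, (C₁*K) * (K^m / m !) < 1 := by
    have htend := FloorSemiring.tendsto_pow_div_factorial_atTop (K := ℝ) K
    have htend2 : Tendsto (fun m : ℕ => (C₁*K) * (K^m / m !)) atTop (nhds 0) := by
      simpa using htend.const_mul (C₁*K)
    exact eventually_atTop.1 (htend2.eventually_lt_const one_pos)
  obtain ⟨n, hnge, hnprime⟩ :=
    Nat.exists_infinite_primes (max (N₀+1) (max (max q b) (max 2 a.natAbs)) + 1)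
  have hn1 : 1 ≤ n := hnprime.one_lt.le
  have hnq : q < n := by omega
  have hnb : b < n := by omega
  have hn2 : 2 < n := by omega
  have hna : a.natAbs < n := by omega
  have hnN₀ : N₀ ≤ n - 1 := by omega
  have hsize : C₁ * K^n < (n-1)! := by
    have h := hN₀ (n-1) hnN₀
    have hKn : K^n = K * K^(n-1) := by
      rw [← pow_succ']
      congr 1
      omega
    have hfpos : (0:ℝ) < (n-1)! := by exact_mod_cast Nat.factorial_pos (n-1)
    have h2 : (C₁*K) * K^(n-1) < (n-1)! := by
      rw [← div_lt_one hfpos]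
      calc (C₁*K) * K^(n-1) / (n-1)! = (C₁*K) * (K^(n-1) / ((n-1)! : ℝ)) := by ring
        _ < 1 := h
    calc C₁ * K^n = (C₁*K) * K^(n-1) := by rw [hKn]; ring
      _ < (n-1)! := h2
  -- the polynomial side
  have hbt : ∀ k:ℕ, (b:ℂ) * ((k:ℂ) * (((r:ℝ):ℂ) * I)) = (k:ℂ) * ((a:ℂ)*I) := by
    intro k
    have h' : ((b:ℝ):ℂ) * ((r:ℝ):ℂ) = ((a:ℝ):ℂ) := by
      rw [← Complex.ofReal_mul]
      exact congrArg Complex.ofReal (by linarith)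
    push_cast at h' ⊢
    linear_combination (k:ℂ) * I * h'
  have hFt : ∀ k : ℕ, (sumIDeriv (((phi a n).map toComplex).comp (C (b:ℂ) * X))).eval
      ((k:ℂ) * (((r:ℝ):ℂ) * I)) = toComplex (Gs a b n k) :=
    fun k => eval_sumIDeriv_eq a b n k _ (hbt k)
  have hF0 : (sumIDeriv (((phi a n).map toComplex).comp (C (b:ℂ) * X))).eval 0
      = toComplex (Gs a b n 0) := by
    have h := hFt 0
    simpa using h
  set F : ℂ[X] := sumIDeriv (((phi a n).map toComplex).comp (C (b:ℂ) * X)) with hF_def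
  have hF1 : F.eval (((r:ℝ):ℂ) * I) = toComplex (Gs a b n 1) := by
    have h := hFt 1
    rwa [show ((1:ℕ):ℂ) = 1 by norm_num, one_mul] at h
  have hF2 : F.eval (2 * (((r:ℝ):ℂ) * I)) = toComplex (Gs a b n 2) := by
    have h := hFt 2
    rwa [show ((2:ℕ):ℂ) = 2 by norm_num] at h
  have he2 : Complex.exp (2 * (((r:ℝ):ℂ) * I)) = z * z := by
    rw [hz_def, ← Complex.exp_add, two_mul]
  -- identity
  have hNE : toComplex (Ndef a p b q n)
      = -((-(2*(p:ℂ)*I)) * (z * F.eval 0 - F.eval (((r:ℝ):ℂ) * I))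
          + (q:ℂ) * (z * z * F.eval 0 - F.eval (2 * (((r:ℝ):ℂ) * I)))) := by
    have hgi : toComplex (⟨0,1⟩ : GaussianInt) = I := by
      rw [toComplex_def']; simp
    have h2c : toComplex 2 = 2 := by
      have h22 : ((2:ℕ):GaussianInt) = (2:GaussianInt) := by push_cast; ring
      rw [← h22, map_natCast]; norm_num
    rw [Ndef]
    simp only [map_add, map_mul, map_neg, map_natCast, map_intCast, hgi, h2c]
    rw [← hF0, ← hF1, ← hF2]
    linear_combination (F.eval 0) * hrel
  -- norms of the points
  have habr : |(r:ℝ)| * (b:ℝ) = A := by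
    have h' : |(r:ℝ)| * |(b:ℝ)| = |(a:ℝ)| := by rw [← abs_mul, hbr]
    rw [abs_of_pos (show (0:ℝ) < (b:ℝ) by exact_mod_cast hb0)] at h'
    rw [hA_def, Nat.cast_natAbs, Int.cast_abs, h']
  have hnormrI : ‖((r:ℝ):ℂ) * I‖ = |(r:ℝ)| := by
    rw [norm_mul, Complex.norm_I, mul_one, Complex.norm_real, Real.norm_eq_abs]
  -- bounds for the two Hermite quantities
  have hE1 : ‖z * F.eval 0 - F.eval (((r:ℝ):ℂ) * I)‖ ≤ R2 * Real.exp R2 * K^n := by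
    have htR : ‖((r:ℝ):ℂ) * I‖ ≤ R2 := by
      rw [hnormrI, hR2_def]; nlinarith [abs_nonneg (r:ℝ)]
    have hbtk : ‖(b:ℂ) * (((r:ℝ):ℂ) * I)‖ ≤ 2*(a.natAbs:ℝ) := by
      rw [norm_mul, hnormrI, show ((b:ℂ)) = ((b:ℝ):ℂ) by push_cast; ring,
        Complex.norm_real, Real.norm_eq_abs,
        abs_of_pos (show (0:ℝ) < (b:ℝ) by exact_mod_cast hb0)]
      rw [mul_comm, habr]
      rw [hA_def]
      nlinarith [hA1, hA_def]
    have h := Ebound a ha b n (((r:ℝ):ℂ) * I) R2 hR2pos htR hbtk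
    rw [← hA_def, ← hK_def, ← hF_def, ← hz_def] at h
    exact h
  have hE2 : ‖z * z * F.eval 0 - F.eval (2 * (((r:ℝ):ℂ) * I))‖
      ≤ R2 * Real.exp R2 * K^n := by
    have htR : ‖2 * (((r:ℝ):ℂ) * I)‖ ≤ R2 := by
      rw [norm_mul, hnormrI, Complex.norm_ofNat, hR2_def]
    have hbtk : ‖(b:ℂ) * (2 * (((r:ℝ):ℂ) * I))‖ ≤ 2*(a.natAbs:ℝ) := by
      rw [show (b:ℂ) * (2 * (((r:ℝ):ℂ) * I)) = 2 * ((b:ℂ) * (((r:ℝ):ℂ) * I)) by ring,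
        norm_mul, Complex.norm_ofNat, norm_mul, hnormrI,
        show ((b:ℂ)) = ((b:ℝ):ℂ) by push_cast; ring,
        Complex.norm_real, Real.norm_eq_abs,
        abs_of_pos (show (0:ℝ) < (b:ℝ) by exact_mod_cast hb0)]
      rw [mul_comm (b:ℝ) _, habr, hA_def]
    have h := Ebound a ha b n (2 * (((r:ℝ):ℂ) * I)) R2 hR2pos htR hbtk
    rw [← hA_def, ← hK_def, ← hF_def, he2] at h
    exact h
  -- upper bound
  have hupper : ‖(toComplex (Ndef a p b q n) : ℂ)‖ ≤ C₁ * K^n := by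
    rw [hNE, norm_neg]
    have hn1' : ‖(-(2*(p:ℂ)*I))‖ = 2*(p.natAbs:ℝ) := by
      rw [norm_neg, norm_mul, norm_mul, Complex.norm_I, mul_one, Complex.norm_ofNat,
        show ((p:ℂ)) = ((p:ℝ):ℂ) by push_cast; ring, Complex.norm_real,
        Real.norm_eq_abs, Nat.cast_natAbs]
      simp
    have hn2' : ‖((q:ℂ))‖ = (q:ℝ) := Complex.norm_natCast q
    have hEnn : (0:ℝ) ≤ R2 * Real.exp R2 * K^n := by positivity
    calc ‖(-(2*(p:ℂ)*I)) * (z * F.eval 0 - F.eval (((r:ℝ):ℂ) * I))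
            + (q:ℂ) * (z * z * F.eval 0 - F.eval (2 * (((r:ℝ):ℂ) * I)))‖
        ≤ ‖(-(2*(p:ℂ)*I)) * (z * F.eval 0 - F.eval (((r:ℝ):ℂ) * I))‖
            + ‖(q:ℂ) * (z * z * F.eval 0 - F.eval (2 * (((r:ℝ):ℂ) * I)))‖ :=
          norm_add_le _ _
      _ = 2*(p.natAbs:ℝ) * ‖z * F.eval 0 - F.eval (((r:ℝ):ℂ) * I)‖
            + (q:ℝ) * ‖z * z * F.eval 0 - F.eval (2 * (((r:ℝ):ℂ) * I))‖ := by
          rw [norm_mul, norm_mul, hn1', hn2']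
      _ ≤ 2*(p.natAbs:ℝ) * (R2 * Real.exp R2 * K^n) + (q:ℝ) * (R2 * Real.exp R2 * K^n) := by
          have u1 := mul_le_mul_of_nonneg_left hE1
            (show (0:ℝ) ≤ 2*(p.natAbs:ℝ) by positivity)
          have u2 := mul_le_mul_of_nonneg_left hE2 (Nat.cast_nonneg (α := ℝ) q)
          exact add_le_add u1 u2
      _ ≤ C₁ * K^n := by
          rw [hC₁_def]
          have hq' : (0:ℝ) ≤ (q:ℝ) := Nat.cast_nonneg q
          nlinarith [hEnn, Nat.cast_nonneg (α := ℝ) q]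
  have hlower := N_lower a p b q n hnprime ha hb0 hq0 hnq hnb hn2 hna
  have : ((n-1)! : ℝ) < ((n-1)! : ℝ) := lt_of_le_of_lt (hlower.trans hupper) hsize
  exact absurd this (lt_irrefl _)

end SinIrrAux

theorem sin_rat_irrational (r : ℚ) (hr : r ≠ 0) :
    Irrational (Real.sin (r : ℝ)) := SinIrrAux.main r hr
end
end

section
/- For every nonzero rational number r, the real number tan r is irrational. -/
open Real intervalIntegral

private lemma had_ab (a b x : ℝ) : HasDerivAt (fun x : ℝ => a - b*x) (-b) x := by
  simpa using ((hasDerivAt_id x).const_mul b).const_sub a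

private lemma had_w (a b : ℝ) (k : ℕ) (x : ℝ) :
    HasDerivAt (fun x : ℝ => x^(k+1)*(a-b*x)^(k+1))
      (((k:ℝ)+1) * (x^k*(a-b*x)^k) * (a - 2*b*x)) x := by
  have h := (hasDerivAt_pow (k+1) x).fun_mul ((had_ab a b x).fun_pow (k+1))
  refine h.congr_deriv ?_
  push_cast
  ring

private lemma J_rec (a b s : ℝ) (hs : b * s = a) (m : ℕ) :
    ∫ x in (0:ℝ)..s, x^(m+2)*(a-b*x)^(m+2) * Real.sin (s-x)
      = (((m:ℝ)+2)*(4*(m:ℝ)+6)*b) * (∫ x in (0:ℝ)..s, x^(m+1)*(a-b*x)^(m+1) * Real.sin (s-x))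
        - (((m:ℝ)+2)*((m:ℝ)+1)*a^2) * ∫ x in (0:ℝ)..s, x^m*(a-b*x)^m * Real.sin (s-x) := by
  have key : ∫ x in (0:ℝ)..s,
      ((x^(m+2)*(a-b*x)^(m+2)
        + (((m:ℝ)+2)*((m:ℝ)+1)*a^2 * (x^m*(a-b*x)^m)
          - ((m:ℝ)+2)*(4*(m:ℝ)+6)*b * (x^(m+1)*(a-b*x)^(m+1)))) * Real.sin (s-x)) = 0 := by
    set F : ℝ → ℝ := fun x =>
      ((m:ℝ)+2) * (x^(m+1)*(a-b*x)^(m+1)) * (a - 2*b*x) * Real.sin (s - x)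
        + x^(m+2)*(a-b*x)^(m+2) * Real.cos (s - x) with hF
    have hder : ∀ x ∈ Set.uIcc (0:ℝ) s, HasDerivAt F
        ((x^(m+2)*(a-b*x)^(m+2)
          + (((m:ℝ)+2)*((m:ℝ)+1)*a^2 * (x^m*(a-b*x)^m)
            - ((m:ℝ)+2)*(4*(m:ℝ)+6)*b * (x^(m+1)*(a-b*x)^(m+1)))) * Real.sin (s-x)) x := by
      intro x _
      have h1 : HasDerivAt (fun x : ℝ => s - x) (-1) x := by
        simpa using (hasDerivAt_id x).const_sub s
      have hsin := h1.sin
      have hcos := h1.cos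
      have hD := ((had_w a b m x).const_mul ((m:ℝ)+2)).fun_mul (had_ab a (2*b) x)
      have hw : HasDerivAt (fun x : ℝ => x^(m+2)*(a-b*x)^(m+2))
          (((m:ℝ)+2) * (x^(m+1)*(a-b*x)^(m+1)) * (a - 2*b*x)) x := by
        have := had_w a b (m+1) x
        convert this using 2 <;> push_cast <;> ring
      have := (hD.fun_mul hsin).fun_add (hw.fun_mul hcos)
      refine this.congr_deriv ?_
      ring
    have hcont : IntervalIntegrable (fun x : ℝ =>
        (x^(m+2)*(a-b*x)^(m+2)
          + (((m:ℝ)+2)*((m:ℝ)+1)*a^2 * (x^m*(a-b*x)^m)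
            - ((m:ℝ)+2)*(4*(m:ℝ)+6)*b * (x^(m+1)*(a-b*x)^(m+1)))) * Real.sin (s-x))
        MeasureTheory.volume 0 s := by
      apply Continuous.intervalIntegrable
      fun_prop
    rw [intervalIntegral.integral_eq_sub_of_hasDerivAt hder hcont]
    have h2 : a - b * s = 0 := by linarith
    simp [hF, h2, zero_pow]
  have i1 : IntervalIntegrable (fun x : ℝ => x^(m+2)*(a-b*x)^(m+2) * Real.sin (s-x))
      MeasureTheory.volume 0 s := by apply Continuous.intervalIntegrable; fun_prop
  have i2 : IntervalIntegrable (fun x : ℝ =>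
      ((m:ℝ)+2)*((m:ℝ)+1)*a^2 * (x^m*(a-b*x)^m) * Real.sin (s-x))
      MeasureTheory.volume 0 s := by apply Continuous.intervalIntegrable; fun_prop
  have i3 : IntervalIntegrable (fun x : ℝ =>
      ((m:ℝ)+2)*(4*(m:ℝ)+6)*b * (x^(m+1)*(a-b*x)^(m+1)) * Real.sin (s-x))
      MeasureTheory.volume 0 s := by apply Continuous.intervalIntegrable; fun_prop
  have expand : (fun x : ℝ =>
      ((x^(m+2)*(a-b*x)^(m+2)
        + (((m:ℝ)+2)*((m:ℝ)+1)*a^2 * (x^m*(a-b*x)^m)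
          - ((m:ℝ)+2)*(4*(m:ℝ)+6)*b * (x^(m+1)*(a-b*x)^(m+1)))) * Real.sin (s-x)))
      = (fun x : ℝ => x^(m+2)*(a-b*x)^(m+2) * Real.sin (s-x)
        + (((m:ℝ)+2)*((m:ℝ)+1)*a^2 * (x^m*(a-b*x)^m) * Real.sin (s-x)
          - ((m:ℝ)+2)*(4*(m:ℝ)+6)*b * (x^(m+1)*(a-b*x)^(m+1)) * Real.sin (s-x))) := by
    funext x; ring
  rw [expand, intervalIntegral.integral_add i1 (i2.sub i3),
    intervalIntegral.integral_sub i2 i3] at key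
  have e2 : ∫ x in (0:ℝ)..s, ((m:ℝ)+2)*((m:ℝ)+1)*a^2 * (x^m*(a-b*x)^m) * Real.sin (s-x)
      = (((m:ℝ)+2)*((m:ℝ)+1)*a^2) * ∫ x in (0:ℝ)..s, x^m*(a-b*x)^m * Real.sin (s-x) := by
    rw [← intervalIntegral.integral_const_mul]; congr 1; funext x; ring
  have e3 : ∫ x in (0:ℝ)..s, ((m:ℝ)+2)*(4*(m:ℝ)+6)*b * (x^(m+1)*(a-b*x)^(m+1)) * Real.sin (s-x)
      = (((m:ℝ)+2)*(4*(m:ℝ)+6)*b) * ∫ x in (0:ℝ)..s, x^(m+1)*(a-b*x)^(m+1) * Real.sin (s-x) := by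
    rw [← intervalIntegral.integral_const_mul]; congr 1; funext x; ring
  rw [e2, e3] at key
  linarith

private lemma J_zero (s : ℝ) : ∫ x in (0:ℝ)..s, Real.sin (s-x) = 1 - Real.cos s := by
  have : ∀ x : ℝ, Real.sin (s - x) = Real.sin (s - x) := fun _ => rfl
  rw [intervalIntegral.integral_comp_sub_left (fun u => Real.sin u) s]
  simp [integral_sin]

private lemma J_one (a b s : ℝ) (hs : b * s = a) :
    ∫ x in (0:ℝ)..s, x*(a-b*x) * Real.sin (s-x)
      = 2*b*(1 - Real.cos s) - a * Real.sin s := by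
  set F : ℝ → ℝ := fun x => (a - 2*b*x) * Real.sin (s - x) + x*(a-b*x) * Real.cos (s - x) with hF
  have hder : ∀ x ∈ Set.uIcc (0:ℝ) s,
      HasDerivAt F ((x*(a-b*x) - 2*b) * Real.sin (s-x)) x := by
    intro x _
    have h1 : HasDerivAt (fun x : ℝ => s - x) (-1) x := by
      simpa using (hasDerivAt_id x).const_sub s
    have hw : HasDerivAt (fun x : ℝ => x*(a-b*x)) (1*(a-b*x) + x*(-b)) x :=
      (hasDerivAt_id x).mul (had_ab a b x)
    have := ((had_ab a (2*b) x).fun_mul h1.sin).fun_add (hw.fun_mul h1.cos)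
    refine this.congr_deriv ?_
    ring
  have hcont : IntervalIntegrable (fun x : ℝ => (x*(a-b*x) - 2*b) * Real.sin (s-x))
      MeasureTheory.volume 0 s := by apply Continuous.intervalIntegrable; fun_prop
  have key := intervalIntegral.integral_eq_sub_of_hasDerivAt hder hcont
  have h2 : a - b * s = 0 := by linarith
  have hFs : F s = 0 := by
    have h3 : s * (a - b*s) = 0 := by rw [h2]; ring
    simp [hF, h3]
  have hF0 : F 0 = a * Real.sin s := by simp [hF]
  rw [hFs, hF0] at key
  have i1 : IntervalIntegrable (fun x : ℝ => x*(a-b*x) * Real.sin (s-x))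
      MeasureTheory.volume 0 s := by apply Continuous.intervalIntegrable; fun_prop
  have i2 : IntervalIntegrable (fun x : ℝ => (2*b) * Real.sin (s-x))
      MeasureTheory.volume 0 s := by apply Continuous.intervalIntegrable; fun_prop
  have expand : (fun x : ℝ => (x*(a-b*x) - 2*b) * Real.sin (s-x))
      = (fun x : ℝ => x*(a-b*x) * Real.sin (s-x) - (2*b) * Real.sin (s-x)) := by
    funext x; ring
  rw [expand, intervalIntegral.integral_sub i1 i2, intervalIntegral.integral_const_mul,
    J_zero] at key
  linarith

private def ABs (a b : ℤ) : ℕ → ℤ × ℤ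
  | 0 => (1, 0)
  | 1 => (2*b, a)
  | (n+2) => ((4*(n:ℤ)+6)*b*(ABs a b (n+1)).1 - a^2*(ABs a b n).1,
              (4*(n:ℤ)+6)*b*(ABs a b (n+1)).2 - a^2*(ABs a b n).2)

private lemma J_repr (a b : ℤ) (s : ℝ) (hs : (b:ℝ) * s = (a:ℝ)) :
    ∀ n : ℕ, (∫ x in (0:ℝ)..s, x^n*((a:ℝ)-(b:ℝ)*x)^n * Real.sin (s-x)) / (n.factorial : ℝ)
      = ((ABs a b n).1 : ℝ) * (1 - Real.cos s) - ((ABs a b n).2 : ℝ) * Real.sin s := by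
  intro n
  induction n using Nat.strong_induction_on with
  | _ n ih =>
    match n with
    | 0 => simp [ABs, J_zero]
    | 1 =>
      have := J_one (a:ℝ) (b:ℝ) s hs
      simp only [pow_one, Nat.factorial_one, Nat.cast_one, div_one, ABs]
      rw [this]
      push_cast
      ring
    | (n+2) =>
      have h1 := ih (n+1) (by omega)
      have h0 := ih n (by omega)
      have hrec := J_rec (a:ℝ) (b:ℝ) s hs n
      have hf1 : (((n+1).factorial : ℝ)) ≠ 0 := by positivity
      have hf0 : ((n.factorial : ℝ)) ≠ 0 := by positivity
      have hfs : (((n+2).factorial : ℝ)) = ((n:ℝ)+2) * ((n:ℝ)+1) * (n.factorial : ℝ) := by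
        rw [Nat.factorial_succ, Nat.factorial_succ]
        push_cast
        ring
      have hfs1 : (((n+1).factorial : ℝ)) = ((n:ℝ)+1) * (n.factorial : ℝ) := by
        rw [Nat.factorial_succ]; push_cast; ring
      have e1 : (∫ x in (0:ℝ)..s, x^(n+1)*((a:ℝ)-(b:ℝ)*x)^(n+1) * Real.sin (s-x))
          = ((n+1).factorial : ℝ) * (((ABs a b (n+1)).1 : ℝ) * (1 - Real.cos s)
            - ((ABs a b (n+1)).2 : ℝ) * Real.sin s) := by
        rw [← h1]; field_simp
      have e0 : (∫ x in (0:ℝ)..s, x^n*((a:ℝ)-(b:ℝ)*x)^n * Real.sin (s-x))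
          = (n.factorial : ℝ) * (((ABs a b n).1 : ℝ) * (1 - Real.cos s)
            - ((ABs a b n).2 : ℝ) * Real.sin s) := by
        rw [← h0]; field_simp
      rw [hrec, e1, e0]
      show _ = (((4*(n:ℤ)+6)*b*(ABs a b (n+1)).1 - a^2*(ABs a b n).1 : ℤ) : ℝ) * _
        - (((4*(n:ℤ)+6)*b*(ABs a b (n+1)).2 - a^2*(ABs a b n).2 : ℤ) : ℝ) * _
      rw [hfs, hfs1]
      field_simp
      push_cast
      ring

private lemma J_bound (a b s : ℝ) (ha : 0 ≤ a) (hspos : 0 < s) (hs : b * s = a) (hb : 0 < b)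
    (n : ℕ) :
    |∫ x in (0:ℝ)..s, x^n*(a-b*x)^n * Real.sin (s-x)| ≤ s * (s*a)^n := by
  have key : ∀ x ∈ Set.uIoc (0:ℝ) s, ‖x^n*(a-b*x)^n * Real.sin (s-x)‖ ≤ (s*a)^n := by
    intro x hx
    rw [Set.uIoc_of_le hspos.le] at hx
    obtain ⟨hx0, hxs⟩ := hx
    have h1 : 0 ≤ a - b*x := by nlinarith
    have h2 : a - b*x ≤ a := by nlinarith
    have h3 : (0:ℝ) ≤ x^n*(a-b*x)^n := by positivity
    have h4 : x^n*(a-b*x)^n ≤ (s*a)^n := by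
      rw [mul_pow]
      exact mul_le_mul (pow_le_pow_left₀ hx0.le hxs n) (pow_le_pow_left₀ h1 h2 n)
        (by positivity) (by positivity)
    rw [norm_mul]
    calc ‖x^n*(a-b*x)^n‖ * ‖Real.sin (s-x)‖ ≤ (s*a)^n * 1 := by
          apply mul_le_mul _ (Real.abs_sin_le_one _) (abs_nonneg _) (by positivity)
          rwa [Real.norm_eq_abs, abs_of_nonneg h3]
      _ = (s*a)^n := mul_one _
  have := intervalIntegral.norm_integral_le_of_norm_le_const key
  rw [Real.norm_eq_abs] at this
  calc |∫ x in (0:ℝ)..s, x^n*(a-b*x)^n * Real.sin (s-x)| ≤ (s*a)^n * |s - 0| := this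
    _ = s * (s*a)^n := by rw [abs_of_pos (by simpa using hspos)]; ring

private lemma rat_ne_int_mul_pi (c : ℚ) (k : ℤ) (hk : k ≠ 0) : (c:ℝ) ≠ (k:ℝ) * Real.pi := by
  intro h
  apply irrational_pi
  refine ⟨c / k, ?_⟩
  have hk' : (k:ℝ) ≠ 0 := Int.cast_ne_zero.mpr hk
  push_cast
  rw [h]
  field_simp

private lemma tan_pos_irrational (r : ℚ) (hr : 0 < r) : Irrational (Real.tan r) := by
  by_contra hcon
  obtain ⟨t, ht⟩ : ∃ t : ℚ, (t:ℝ) = Real.tan r := not_not.mp hcon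
  set σ : ℚ := 2*r with hσ
  have hσpos : 0 < σ := by positivity
  set a : ℤ := σ.num with haa
  set b : ℤ := (σ.den : ℤ) with hbb
  have ha : 0 < a := Rat.num_pos.mpr hσpos
  have hb : 0 < b := by rw [hbb]; exact_mod_cast σ.den_pos
  set s : ℝ := (σ : ℝ) with hss
  have hspos : 0 < s := by rw [hss]; exact_mod_cast hσpos
  have hbs : (b:ℝ) * s = (a:ℝ) := by
    rw [hss, Rat.cast_def]
    rw [haa, hbb]
    have : (σ.den : ℝ) ≠ 0 := by exact_mod_cast σ.den_pos.ne'
    field_simp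
    norm_cast
  have hs2r : s = 2 * (r:ℝ) := by rw [hss, hσ]; push_cast; ring
  -- pi facts
  have hsin : Real.sin s ≠ 0 := by
    intro h
    obtain ⟨k, hk⟩ := Real.sin_eq_zero_iff.mp h
    rcases eq_or_ne k 0 with h0 | h0
    · rw [h0] at hk; simp at hk; exact absurd (hk.symm) (ne_of_gt hspos)
    · exact rat_ne_int_mul_pi σ k h0 (by rw [← hss]; exact hk.symm)
  have hcos1 : Real.cos s ≠ 1 := by
    intro h
    obtain ⟨k, hk⟩ := (Real.cos_eq_one_iff s).mp h
    rcases eq_or_ne k 0 with h0 | h0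
    · rw [h0] at hk; simp at hk; exact absurd (hk.symm) (ne_of_gt hspos)
    · refine rat_ne_int_mul_pi σ (2*k) (by omega) ?_
      rw [← hss]; push_cast; linarith [hk]
  have hcosr : Real.cos (r:ℝ) ≠ 0 := by
    intro h
    obtain ⟨k, hk⟩ := Real.cos_eq_zero_iff.mp h
    refine rat_ne_int_mul_pi (2*r) (2*k+1) (by omega) ?_
    push_cast
    rw [hk]; push_cast; ring
  -- key identity
  have hhalf : 1 - Real.cos s = Real.tan (r:ℝ) * Real.sin s := by
    rw [hs2r, Real.sin_two_mul, Real.cos_two_mul, Real.tan_eq_sin_div_cos]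
    have hpyth := Real.sin_sq_add_cos_sq (r:ℝ)
    field_simp
    linear_combination (-2) * hpyth
  set p : ℤ := t.num with hpp
  set q : ℤ := (t.den : ℤ) with hqq
  have hq : 0 < q := by rw [hqq]; exact_mod_cast t.den_pos
  have hqt : (q:ℝ) * (t:ℝ) = (p:ℝ) := by
    rw [Rat.cast_def, hpp, hqq]
    have : (t.den : ℝ) ≠ 0 := by exact_mod_cast t.den_pos.ne'
    field_simp
    push_cast; ring
  have hpq : (q:ℝ) * (1 - Real.cos s) = (p:ℝ) * Real.sin s := by
    rw [hhalf, ← ht, ← mul_assoc, hqt]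
  -- the sequences
  set In : ℕ → ℝ := fun n =>
    (∫ x in (0:ℝ)..s, x^n*((a:ℝ)-(b:ℝ)*x)^n * Real.sin (s-x)) / (n.factorial : ℝ) with hIn
  have hrepr : ∀ n, In n = ((ABs a b n).1 : ℝ) * (1 - Real.cos s)
      - ((ABs a b n).2 : ℝ) * Real.sin s := J_repr a b s hbs
  set kk : ℕ → ℤ := fun n => p * (ABs a b n).1 - q * (ABs a b n).2 with hkk
  have hkn : ∀ n, (q:ℝ) * In n = (kk n : ℝ) * Real.sin s := by
    intro n
    rw [hrepr n]
    have h1 : (q:ℝ) * (((ABs a b n).1:ℝ) * (1 - Real.cos s) - ((ABs a b n).2:ℝ) * Real.sin s)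
        = ((ABs a b n).1:ℝ) * ((q:ℝ) * (1 - Real.cos s)) - (q:ℝ) * ((ABs a b n).2:ℝ) * Real.sin s := by
      ring
    rw [h1, hpq, hkk]
    push_cast
    ring
  -- smallness of In
  have hInb : ∀ n, |In n| ≤ s * (s*(a:ℝ))^n / (n.factorial:ℝ) := by
    intro n
    have hb1 := J_bound (a:ℝ) (b:ℝ) s (by exact_mod_cast ha.le) hspos hbs (by exact_mod_cast hb) n
    rw [hIn]
    simp only
    rw [abs_div, abs_of_pos (by positivity : (0:ℝ) < (n.factorial:ℝ))]
    gcongr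
  have htend : Filter.Tendsto (fun n => (kk n : ℝ)) Filter.atTop (nhds 0) := by
    apply squeeze_zero_norm
      (a := fun n => ((q:ℝ)/|Real.sin s|) * (s * (s*(a:ℝ))^n / (n.factorial:ℝ)))
    · intro n
      have h2 : (kk n : ℝ) = (q:ℝ) * In n / Real.sin s := by
        rw [hkn n]; field_simp
      have h1 : |(kk n:ℝ)| = (q:ℝ) * |In n| / |Real.sin s| := by
        rw [h2, abs_div, abs_mul, abs_of_pos (by exact_mod_cast hq : (0:ℝ) < (q:ℝ))]
      rw [Real.norm_eq_abs, h1, div_mul_eq_mul_div]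
      gcongr
      exact hInb n
    · have h3 : Filter.Tendsto (fun n : ℕ => (s*(a:ℝ))^n / (n.factorial:ℝ))
          Filter.atTop (nhds 0) := FloorSemiring.tendsto_pow_div_factorial_atTop _
      have h4 := (h3.const_mul s).const_mul ((q:ℝ)/|Real.sin s|)
      simpa [mul_div_assoc] using h4
  obtain ⟨N, hN⟩ := Metric.tendsto_atTop.mp htend 1 (by norm_num)
  have hkz : ∀ n, N ≤ n → kk n = 0 := by
    intro n hn
    have := hN n hn
    rw [Real.dist_eq, sub_zero] at this
    have h5 : |kk n| < 1 := by
      rw [← Int.cast_abs] at this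
      exact_mod_cast this
    have h6 := abs_lt.mp h5
    omega
  have hInz : ∀ n, N ≤ n → In n = 0 := by
    intro n hn
    have h1 := hkn n
    rw [hkz n hn] at h1
    simp at h1
    rcases h1 with h1 | h1
    · exact absurd h1 (by omega)
    · exact h1
  have hInrec : ∀ m : ℕ, In (m+2) = (4*(m:ℝ)+6) * (b:ℝ) * In (m+1) - (a:ℝ)^2 * In m := by
    intro m
    rw [hrepr (m+2), hrepr (m+1), hrepr m]
    show (((4*(m:ℤ)+6)*b*(ABs a b (m+1)).1 - a^2*(ABs a b m).1 : ℤ) : ℝ) * _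
        - (((4*(m:ℤ)+6)*b*(ABs a b (m+1)).2 - a^2*(ABs a b m).2 : ℤ) : ℝ) * _ = _
    push_cast
    ring
  have hdown : ∀ d : ℕ, In (N - d) = 0 ∧ In (N - d + 1) = 0 := by
    intro d
    induction d with
    | zero => exact ⟨hInz N (by omega), hInz (N+1) (by omega)⟩
    | succ d ih =>
      rcases Nat.eq_zero_or_pos (N - d) with h0 | h0
      · have e1 : N - (d+1) = 0 := by omega
        have e2 : N - d = 0 := h0
        rw [e1]
        rw [e2] at ih
        exact ⟨ih.1, ih.2⟩
      · obtain ⟨c, hc⟩ : ∃ c, N - d = c + 1 := ⟨N - d - 1, by omega⟩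
        have e1 : N - (d+1) = c := by omega
        rw [e1]
        rw [hc] at ih
        refine ⟨?_, ih.1⟩
        have hr2 := hInrec c
        have ha2 : ((a:ℝ))^2 ≠ 0 := by
          have : (a:ℝ) ≠ 0 := by exact_mod_cast ha.ne'
          positivity
        have : In (c+2) = 0 := by
          have e3 : c + 2 = (c+1) + 1 := by omega
          rw [e3]; exact ih.2
        rw [this, ih.1] at hr2
        simp at hr2
        rcases hr2 with h | h
        · exact absurd h (by exact_mod_cast ha.ne')
        · exact h
  have hI0 : In 0 = 0 := by
    have := (hdown N).1
    simpa using this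
  have hI0' : In 0 = 1 - Real.cos s := by
    rw [hrepr 0]
    simp [ABs]
  rw [hI0'] at hI0
  apply hcos1
  linarith

theorem tan_rat_irrational (r : ℚ) (hr : r ≠ 0) :
    Irrational (Real.tan (r : ℝ)) := by
  rcases hr.lt_or_gt with h | h
  · have h1 := tan_pos_irrational (-r) (by linarith)
    rw [Rat.cast_neg, Real.tan_neg] at h1
    simpa using h1.neg
  · exact tan_pos_irrational r h
end

section
/- Let f be a polynomial with real coefficients whose degree is at most 2N for some natural number N, and define the polynomial F = Σ_{k=0}^{N} (−1)^k · f^{(2k)}, where f^{(2k)} denotes the (2k)-th derivative of f. Then for every real number a, ∫_0^a f(x) · sin(a − x) dx = F(a) − F(0)·cos a − F'(0)·sin a. -/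
open Polynomial

theorem integral_poly_mul_sin (N : ℕ) (f : ℝ[X]) (hf : f.natDegree ≤ 2 * N)
    (F : ℝ[X])
    (hF : F = ∑ k ∈ Finset.range (N + 1), ((-1 : ℝ)) ^ k • (derivative^[2 * k] f))
    (a : ℝ) :
    ∫ x in (0 : ℝ)..a, f.eval x * Real.sin (a - x) =
      F.eval a - F.eval 0 * Real.cos a - (derivative F).eval 0 * Real.sin a := by
  -- key algebraic identity: F'' + F = f
  have hzero : derivative^[2 * (N + 1)] f = 0 :=
    Polynomial.iterate_derivative_eq_zero (by omega)
  have key : derivative (derivative F) + F = f := by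
    subst hF
    rw [map_sum, map_sum]
    have hterm : ∀ k ∈ Finset.range (N + 1),
        derivative (derivative ((-1 : ℝ) ^ k • derivative^[2 * k] f)) +
          (-1 : ℝ) ^ k • derivative^[2 * k] f
        = ((-1 : ℝ) ^ k • derivative^[2 * k] f)
          - ((-1 : ℝ) ^ (k + 1) • derivative^[2 * (k + 1)] f) := by
      intro k _
      have e : derivative (derivative (derivative^[2 * k] f)) =
          derivative^[2 * (k + 1)] f := by
        have h2 : 2 * (k + 1) = 2 * k + 1 + 1 := by omega
        rw [h2, Function.iterate_succ_apply', Function.iterate_succ_apply']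
      rw [derivative_smul, derivative_smul, e, pow_succ,
        mul_comm ((-1 : ℝ) ^ k) (-1), neg_one_mul, neg_smul]
      abel
    rw [← Finset.sum_add_distrib, Finset.sum_congr rfl hterm, Finset.sum_range_sub'
      (fun k => (-1 : ℝ) ^ k • derivative^[2 * k] f), hzero]
    simp
  have keyev : ∀ x : ℝ, (derivative (derivative F)).eval x + F.eval x = f.eval x := by
    intro x
    have := congrArg (fun p => Polynomial.eval x p) key
    simpa using this
  have hderiv : ∀ x ∈ Set.uIcc (0 : ℝ) a,
      HasDerivAt (fun x => (derivative F).eval x * Real.sin (a - x)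
          + F.eval x * Real.cos (a - x))
        (f.eval x * Real.sin (a - x)) x := by
    intro x _
    have hsin : HasDerivAt (fun x => Real.sin (a - x)) (-Real.cos (a - x)) x := by
      simpa [Function.comp_def] using (Real.hasDerivAt_sin (a - x)).comp x ((hasDerivAt_id x).const_sub a)
    have hcos : HasDerivAt (fun x => Real.cos (a - x)) (Real.sin (a - x)) x := by
      simpa [Function.comp_def] using (Real.hasDerivAt_cos (a - x)).comp x ((hasDerivAt_id x).const_sub a)
    have h := (((derivative F).hasDerivAt x).mul hsin).add ((F.hasDerivAt x).mul hcos)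
    refine h.congr_deriv ?_
    linear_combination (Real.sin (a - x)) * keyev x
  have hint : IntervalIntegrable (fun x => f.eval x * Real.sin (a - x))
      MeasureTheory.volume 0 a := by
    apply Continuous.intervalIntegrable
    exact f.continuous.mul
      (Real.continuous_sin.comp (continuous_const.sub continuous_id))
  have := intervalIntegral.integral_eq_sub_of_hasDerivAt hderiv hint
  rw [this]
  simp only [sub_self, sub_zero, Real.sin_zero, Real.cos_zero, mul_zero, mul_one, zero_add]
  ring
end

section
/- Let g be a polynomial with integer coefficients, let n be a natural number, and define the polynomial f(x) = xⁿ · g(x) / n! with rational (hence real) coefficients. Then: (i) for every natural number k, the value f^{(k)}(0) of the k-th derivative of f at 0 is an integer; (ii) f^{(k)}(0) = 0 for all k < n; (iii) for all k ≥ n, f^{(k)}(0) = (k! / n!) · c_{k−n}, where c_j denotes the coefficient of x^j in g. -/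
open Polynomial

theorem deriv_at_zero_of_xpow_mul (g : ℤ[X]) (n : ℕ)
    (f : ℚ[X])
    (hf : f = C ((n.factorial : ℚ)⁻¹) * X ^ n * g.map (Int.castRingHom ℚ)) :
    (∀ k : ℕ, ∃ z : ℤ, (derivative^[k] f).eval 0 = (z : ℚ)) ∧
    (∀ k : ℕ, k < n → (derivative^[k] f).eval 0 = 0) ∧
    (∀ k : ℕ, n ≤ k →
      (derivative^[k] f).eval 0 =
        (k.factorial : ℚ) / (n.factorial : ℚ) * (g.coeff (k - n) : ℚ)) := by
  have hcoeff : ∀ k : ℕ, f.coeff k =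
      if n ≤ k then ((n.factorial : ℚ))⁻¹ * (g.coeff (k - n) : ℚ) else 0 := by
    intro k
    rw [hf, mul_assoc, coeff_C_mul]
    split_ifs with h
    · obtain ⟨d, rfl⟩ := Nat.exists_eq_add_of_le h
      rw [add_comm n d, coeff_X_pow_mul, Nat.add_sub_cancel, coeff_map, eq_intCast]
    · rw [coeff_X_pow_mul' ]
      simp [h]
  have heval : ∀ k : ℕ, (derivative^[k] f).eval 0 = (k.factorial : ℚ) * f.coeff k := by
    intro k
    rw [← Polynomial.coeff_zero_eq_eval_zero, Polynomial.coeff_iterate_derivative,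
      zero_add, Nat.descFactorial_self, nsmul_eq_mul]
  have h2 : ∀ k : ℕ, k < n → (derivative^[k] f).eval 0 = 0 := by
    intro k hk
    rw [heval, hcoeff, if_neg (by omega), mul_zero]
  have h3 : ∀ k : ℕ, n ≤ k → (derivative^[k] f).eval 0 =
      (k.factorial : ℚ) / (n.factorial : ℚ) * (g.coeff (k - n) : ℚ) := by
    intro k hk
    rw [heval, hcoeff, if_pos hk, div_eq_mul_inv, mul_assoc]
  refine ⟨?_, h2, h3⟩
  intro k
  by_cases hk : n ≤ k
  · refine ⟨(k.factorial / n.factorial : ℕ) * g.coeff (k - n), ?_⟩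
    rw [h3 k hk]
    push_cast
    rw [Int.cast_div (Int.natCast_dvd_natCast.mpr (Nat.factorial_dvd_factorial hk))
      (by exact_mod_cast n.factorial_ne_zero : (((n.factorial : ℤ)) : ℚ) ≠ 0)]
    push_cast
    ring
  · exact ⟨0, by rw [h2 k (by omega)]; norm_num⟩
end

section
/- Let s, t, m, p be positive integers, set r = s/t, and define the polynomial f(x) = t^{4mp+2p−2} · x^{2p−2} · ∏_{k=1}^{m} (x² − k²r²)^{2p} / (2p−2)!. Then for every natural number j, the value f^{(j)}(0) of the j-th derivative of f at 0 is an integer, and f^{(2j+1)}(0) = 0 for every natural number j. -/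
open Polynomial

theorem niven_poly_deriv_at_zero (s t m p : ℕ) (hs : 0 < s) (ht : 0 < t) (hm : 0 < m) (hp : 0 < p)
    (r : ℝ) (hr : r = (s : ℝ) / (t : ℝ)) (f : ℝ[X])
    (hf : f = C ((t : ℝ) ^ (4 * m * p + 2 * p - 2) / ((2 * p - 2).factorial : ℝ)) *
      X ^ (2 * p - 2) * ∏ k ∈ Finset.Icc 1 m, (X ^ 2 - C ((k : ℝ) ^ 2 * r ^ 2)) ^ (2 * p)) :
    (∀ j : ℕ, ∃ z : ℤ, (derivative^[j] f).eval 0 = (z : ℝ)) ∧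
    (∀ j : ℕ, (derivative^[2 * j + 1] f).eval 0 = 0) := by
  have ht0 : (t : ℝ) ≠ 0 := Nat.cast_ne_zero.mpr ht.ne'
  set u : ℤ[X] := C ((t:ℤ)^(2*p-2)) * X^(p-1) *
      ∏ k ∈ Finset.Icc 1 m, (C ((t:ℤ)^2) * X - C ((k:ℤ)^2*(s:ℤ)^2))^(2*p) with hu
  set g : ℤ[X] := expand ℤ 2 u with hg
  -- key polynomial identity
  have hgf : f = C (((2*p-2).factorial : ℝ))⁻¹ * g.map (Int.castRingHom ℝ) := by
    have hmap : g.map (Int.castRingHom ℝ) =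
        C ((t:ℝ)^(2*p-2)) * (X^2)^(p-1) *
        ∏ k ∈ Finset.Icc 1 m, (C ((t:ℝ)^2) * X^2 - C ((k:ℝ)^2*(s:ℝ)^2))^(2*p) := by
      rw [hg, hu]
      simp [map_expand, Polynomial.map_mul, Polynomial.map_pow, Polynomial.map_prod,
        Polynomial.map_sub, expand_C, expand_X, map_prod, map_pow, map_sub, map_mul,
        Polynomial.map_C, Polynomial.map_X, push_cast]
    rw [hmap, hf]
    have hkey : ∀ k ∈ Finset.Icc 1 m,
        (C ((t:ℝ)^2) * X^2 - C ((k:ℝ)^2*(s:ℝ)^2))^(2*p)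
        = C ((t:ℝ)^(4*p)) * (X^2 - C ((k:ℝ)^2*r^2))^(2*p) := by
      intro k _
      have : (C ((t:ℝ)^2) * X^2 - C ((k:ℝ)^2*(s:ℝ)^2))
          = C ((t:ℝ)^2) * (X^2 - C ((k:ℝ)^2*r^2)) := by
        rw [hr]
        rw [mul_sub, ← C_mul]
        congr 2
        field_simp
      rw [this, mul_pow, ← C_pow, ← pow_mul, show 2*(2*p)=4*p from by ring]
    rw [Finset.prod_congr rfl hkey, Finset.prod_mul_distrib, Finset.prod_const,
      Nat.card_Icc]
    simp only [Nat.add_sub_cancel, ← C_pow, ← pow_mul]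
    have h1 : (2:ℕ) * (p-1) = 2*p-2 := by omega
    have h2' : (t:ℝ)^(4*m*p+2*p-2) = (t:ℝ)^(2*p-2) * (t:ℝ)^(4*p*m) := by
      rw [← pow_add]; congr 1
      have hc : 4*p*m = 4*m*p := Nat.mul_right_comm 4 p m
      omega
    rw [h1, h2', div_eq_mul_inv]
    simp only [C_mul]
    ring
  have hcoeff : ∀ j, f.coeff j = (g.coeff j : ℝ) / ((2*p-2).factorial : ℝ) := by
    intro j
    rw [hgf, coeff_C_mul, coeff_map]
    simp [div_eq_inv_mul]
  have hodd : ∀ j, ¬ (2 ∣ j) → g.coeff j = 0 := by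
    intro j hj
    rw [hg, coeff_expand (by norm_num : 0 < 2)]
    simp [hj]
  have hXu : (X:ℤ[X])^(p-1) ∣ u := ⟨C ((t:ℤ)^(2*p-2)) *
      ∏ k ∈ Finset.Icc 1 m, (C ((t:ℤ)^2) * X - C ((k:ℤ)^2*(s:ℤ)^2))^(2*p), by rw [hu]; ring⟩
  have hlow : ∀ j, j < 2*p-2 → g.coeff j = 0 := by
    intro j hj
    rw [hg, coeff_expand (by norm_num : 0 < 2)]
    by_cases h2 : 2 ∣ j
    · rw [if_pos h2]
      exact (Polynomial.X_pow_dvd_iff.mp hXu) (j/2) (by omega)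
    · rw [if_neg h2]
  have heval : ∀ j, (derivative^[j] f).eval 0 = (j.factorial : ℝ) * f.coeff j := by
    intro j
    rw [← coeff_zero_eq_eval_zero, coeff_iterate_derivative]
    simp [Nat.descFactorial_self, nsmul_eq_mul]
  constructor
  · intro j
    by_cases h2 : 2*p-2 ≤ j
    · obtain ⟨d, hd⟩ := Nat.factorial_dvd_factorial h2
      refine ⟨d * g.coeff j, ?_⟩
      rw [heval, hcoeff, hd]
      have hfac : ((2*p-2).factorial : ℝ) ≠ 0 := Nat.cast_ne_zero.mpr (2*p-2).factorial_ne_zero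
      push_cast
      field_simp
    · refine ⟨0, ?_⟩
      rw [heval, hcoeff, hlow j (lt_of_not_ge h2)]
      simp
  · intro j
    rw [heval, hcoeff, hodd (2*j+1) (by omega)]
    simp
end

section
/- Let s, t, m, p be positive integers, set r = s/t, and define the polynomial f(x) = t^{4mp+2p−2} · x^{2p−2} · ∏_{k=1}^{m} (x² − k²r²)^{2p} / (2p−2)!. Then the (2p−2)-th derivative of f at 0 satisfies f^{(2p−2)}(0) = s^{4mp} · t^{2p−2} · (m!)^{4p}. -/
open Polynomial

theorem niven_poly_key_deriv (s t m p : ℕ) (hs : 0 < s) (ht : 0 < t) (hm : 0 < m) (hp : 0 < p)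
    (r : ℝ) (hr : r = (s : ℝ) / (t : ℝ)) (f : ℝ[X])
    (hf : f = C ((t : ℝ) ^ (4 * m * p + 2 * p - 2) / ((2 * p - 2).factorial : ℝ)) *
      X ^ (2 * p - 2) * ∏ k ∈ Finset.Icc 1 m, (X ^ 2 - C ((k : ℝ) ^ 2 * r ^ 2)) ^ (2 * p)) :
    (derivative^[2 * p - 2] f).eval 0 =
      ((s : ℝ) ^ (4 * m * p) * (t : ℝ) ^ (2 * p - 2) * (m.factorial : ℝ) ^ (4 * p)) := by
  set n := 2 * p - 2 with hn
  set g : ℝ[X] := ∏ k ∈ Finset.Icc 1 m, (X ^ 2 - C ((k : ℝ) ^ 2 * r ^ 2)) ^ (2 * p) with hg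
  rw [← coeff_zero_eq_eval_zero, coeff_iterate_derivative]
  rw [zero_add, Nat.descFactorial_self, hf, mul_assoc, coeff_C_mul]
  have hcoef : (X ^ n * g).coeff n = g.coeff 0 := by
    have := coeff_X_pow_mul g n 0
    rwa [zero_add] at this
  rw [hcoef, coeff_zero_eq_eval_zero]
  have hgev : g.eval 0 = ((m.factorial : ℝ) ^ (4 * p) * r ^ (4 * m * p)) := by
    rw [hg, eval_prod]
    have : ∀ k ∈ Finset.Icc 1 m,
        ((X ^ 2 - C ((k : ℝ) ^ 2 * r ^ 2)) ^ (2 * p)).eval 0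
          = (k : ℝ) ^ (4 * p) * (r ^ (4 * p)) := by
      intro k _
      simp only [eval_pow, eval_sub, eval_X, eval_C]
      rw [zero_pow (by norm_num), zero_sub, Even.neg_pow (even_two_mul p)]
      rw [mul_pow, ← pow_mul, ← pow_mul]
      ring_nf
    rw [Finset.prod_congr rfl this, Finset.prod_mul_distrib, Finset.prod_const,
      Nat.card_Icc, Nat.add_sub_cancel, ← pow_mul]
    have hfac : ∏ k ∈ Finset.Icc 1 m, (k : ℝ) ^ (4 * p) = (m.factorial : ℝ) ^ (4 * p) := by
      have hmf : (m.factorial : ℝ) = ∏ k ∈ Finset.Icc 1 m, (k : ℝ) := by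
        rw [← Nat.cast_prod]
        norm_cast
        rw [← Finset.prod_range_add_one_eq_factorial, ← Finset.Ico_add_one_right_eq_Icc,
          Finset.prod_Ico_eq_prod_range]
        simp [add_comm]
      rw [hmf, ← Finset.prod_pow]
    rw [hfac]
    ring_nf
  rw [hgev, hr]
  have hfacn : ((n.factorial : ℝ)) ≠ 0 := by positivity
  have ht' : (t : ℝ) ≠ 0 := Nat.cast_ne_zero.mpr ht.ne'
  have hexp : 4 * m * p + 2 * p - 2 = 4 * m * p + n := by omega
  rw [hexp, pow_add, div_pow, nsmul_eq_mul]
  field_simp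
end

section
/- Let s, t, m be positive integers, let p be a prime, set r = s/t, and define the polynomial f(x) = t^{4mp+2p−2} · x^{2p−2} · ∏_{k=1}^{m} (x² − k²r²)^{2p} / (2p−2)!. Then: (i) for every natural number j with j ≠ 2p−2, the integer f^{(j)}(0) is divisible by p; (ii) if moreover p > m, p > s, and p > t, then p does not divide the integer f^{(2p−2)}(0). -/
open Polynomial

private lemma c1_mul (a b : ℤ[X]) (ha : a.coeff 1 = 0) (hb : b.coeff 1 = 0) :
    (a * b).coeff 1 = 0 := by
  rw [Polynomial.coeff_mul, show Finset.HasAntidiagonal.antidiagonal 1 = {(0,1),(1,0)} from rfl]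
  simp [ha, hb]

private lemma c1_pow (a : ℤ[X]) (ha : a.coeff 1 = 0) (n : ℕ) : (a ^ n).coeff 1 = 0 := by
  induction n with
  | zero => simp [Polynomial.coeff_one]
  | succ k ih => rw [pow_succ]; exact c1_mul _ _ ih ha

private lemma c1_prod {ι : Type*} (s : Finset ι) (g : ι → ℤ[X])
    (h0 : ∀ i ∈ s, (g i).coeff 1 = 0) : (∏ i ∈ s, g i).coeff 1 = 0 := by
  induction s using Finset.cons_induction with
  | empty => simp [Polynomial.coeff_one]
  | cons a s ha ih =>
    rw [Finset.prod_cons]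
    exact c1_mul _ _ (h0 a (Finset.mem_cons_self a s))
      (ih fun i hi => h0 i (Finset.mem_cons_of_mem hi))

theorem niven_poly_divisibility (s t m : ℕ) (hs : 0 < s) (ht : 0 < t) (hm : 0 < m) (p : ℕ) (hp : p.Prime)
    (r : ℝ) (hr : r = (s : ℝ) / (t : ℝ)) (f : ℝ[X])
    (hf : f = C ((t : ℝ) ^ (4 * m * p + 2 * p - 2) / ((2 * p - 2).factorial : ℝ)) *
      X ^ (2 * p - 2) * ∏ k ∈ Finset.Icc 1 m, (X ^ 2 - C ((k : ℝ) ^ 2 * r ^ 2)) ^ (2 * p)) :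
    (∀ j : ℕ, j ≠ 2 * p - 2 → ∃ z : ℤ, (derivative^[j] f).eval 0 = (z : ℝ) ∧ (p : ℤ) ∣ z) ∧
    (p > m → p > s → p > t →
      ∀ z : ℤ, (derivative^[2 * p - 2] f).eval 0 = (z : ℝ) → ¬ (p : ℤ) ∣ z) := by
  have hp2 : 2 ≤ p := hp.two_le
  set N : ℕ := 2 * p - 2 with hN
  have hN2 : N + 2 = 2 * p := by omega
  set G : ℤ[X] := C ((t : ℤ) ^ N) *
      ∏ k ∈ Finset.Icc 1 m, (C (t : ℤ) ^ 2 * X ^ 2 - C ((k : ℤ) ^ 2 * (s : ℤ) ^ 2)) ^ (2 * p)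
    with hG
  set F : ℤ[X] := G * X ^ N with hF
  have ht0 : (t : ℝ) ≠ 0 := Nat.cast_ne_zero.mpr ht.ne'
  -- the key map identity
  have hfF : f = C (((N.factorial : ℝ))⁻¹) * F.map (Int.castRingHom ℝ) := by
    have hmapG : G.map (Int.castRingHom ℝ) = C ((t : ℝ) ^ (N + 4 * p * m)) *
        ∏ k ∈ Finset.Icc 1 m, (X ^ 2 - C ((k : ℝ) ^ 2 * r ^ 2)) ^ (2 * p) := by
      rw [hG, Polynomial.map_mul, Polynomial.map_prod]
      have hfac : ∀ k ∈ Finset.Icc 1 m,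
          ((C (t : ℤ) ^ 2 * X ^ 2 - C ((k : ℤ) ^ 2 * (s : ℤ) ^ 2)) ^ (2 * p)).map
            (Int.castRingHom ℝ) =
          (C ((t : ℝ) ^ 2)) ^ (2 * p) * (X ^ 2 - C ((k : ℝ) ^ 2 * r ^ 2)) ^ (2 * p) := by
        intro k _
        have hbase : (C (t : ℤ) ^ 2 * X ^ 2 - C ((k : ℤ) ^ 2 * (s : ℤ) ^ 2)).map
            (Int.castRingHom ℝ) = C ((t : ℝ) ^ 2) * (X ^ 2 - C ((k : ℝ) ^ 2 * r ^ 2)) := by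
          rw [Polynomial.map_sub, Polynomial.map_mul, Polynomial.map_pow, Polynomial.map_pow,
            map_C, map_C, map_X, mul_sub, ← C_mul, ← C_pow]
          simp only [eq_intCast]
          push_cast
          rw [sub_right_inj, C_inj, hr]
          field_simp
          try ring
        rw [Polynomial.map_pow, hbase, mul_pow]
      rw [Finset.prod_congr rfl hfac, Finset.prod_mul_distrib, Finset.prod_const,
        Nat.card_Icc, Nat.add_sub_cancel, map_C, ← mul_assoc]
      congr 1
      simp only [← C_pow, ← C_mul]
      congr 1
      simp only [eq_intCast]
      push_cast
      rw [← pow_mul, ← pow_mul, ← pow_add]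
      congr 1
      ring
    rw [hf, hF, Polynomial.map_mul, hmapG, Polynomial.map_pow, map_X]
    have : 4 * m * p + 2 * p - 2 = N + 4 * p * m := by
      have h' : 4 * m * p = 4 * p * m := by ring
      omega
    rw [this, div_eq_mul_inv, pow_add, C_mul, C_mul]
    ring
  -- derivative formula
  have hder : ∀ j : ℕ, (derivative^[j] f).eval 0 =
      ((N.factorial : ℝ))⁻¹ * ((j.factorial : ℤ) * F.coeff j : ℤ) := by
    intro j
    rw [hfF, iterate_derivative_C_mul, eval_mul, eval_C, iterate_derivative_map,
      eval_zero_map]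
    congr 1
    rw [← coeff_zero_eq_eval_zero, coeff_iterate_derivative]
    simp [Nat.descFactorial_self]
  have hcoeff : ∀ j : ℕ, F.coeff j = if N ≤ j then G.coeff (j - N) else 0 := by
    intro j
    rw [hF]
    exact coeff_mul_X_pow' G N j
  -- G.coeff 1 = 0
  have hG1 : G.coeff 1 = 0 := by
    rw [hG, coeff_C_mul, c1_prod _ _ ?_, mul_zero]
    intro k _
    refine c1_pow _ ?_ _
    rw [coeff_sub, ← C_pow, coeff_C_mul, coeff_X_pow, coeff_C]
    norm_num
  -- G.coeff 0
  have hG0 : G.coeff 0 = (t : ℤ) ^ N * ∏ k ∈ Finset.Icc 1 m, ((k : ℤ) ^ 2 * (s : ℤ) ^ 2) ^ (2 * p) := by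
    rw [coeff_zero_eq_eval_zero, hG, eval_mul, eval_C, eval_prod]
    congr 1
    refine Finset.prod_congr rfl fun k _ => ?_
    rw [eval_pow, eval_sub, eval_mul, eval_pow, eval_pow, eval_C, eval_C, eval_X]
    rw [zero_pow (by norm_num), mul_zero, zero_sub, Even.neg_pow (even_two_mul p)]
  have hfacN : (N.factorial : ℝ) ≠ 0 := Nat.cast_ne_zero.mpr (Nat.factorial_ne_zero N)
  constructor
  · intro j hj
    by_cases hjN : N ≤ j
    · by_cases h1 : j - N = 1
      · refine ⟨0, ?_, dvd_zero _⟩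
        have hz0 : F.coeff j = 0 := by rw [hcoeff j, if_pos hjN, h1, hG1]
        rw [hder j, hz0]
        simp
      · have hj2 : N + 2 ≤ j := by omega
        refine ⟨((j.factorial / N.factorial : ℕ) : ℤ) * F.coeff j, ?_, ?_⟩
        · rw [hder j]
          have hdvd : N.factorial ∣ j.factorial := Nat.factorial_dvd_factorial hjN
          simp only [Int.cast_mul, Int.cast_natCast]; rw [Nat.cast_div hdvd hfacN]
          push_cast [Nat.cast_div hdvd hfacN]
          field_simp
          try ring
        · refine Dvd.dvd.mul_right ?_ _
          rw [Int.natCast_dvd_natCast]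
          rw [Nat.dvd_div_iff_mul_dvd (Nat.factorial_dvd_factorial hjN)]
          have h2p : (2 * p).factorial = (2 * p) * ((2 * p - 1) * N.factorial) := by
            have e1 : 2 * p = (2 * p - 1) + 1 := by omega
            have e2 : 2 * p - 1 = N + 1 := by omega
            rw [e1, Nat.factorial_succ, e2, Nat.factorial_succ]
            simp
          have hd1 : N.factorial * p ∣ (2 * p).factorial := by
            rw [h2p]; exact ⟨2 * (2 * p - 1), by ring⟩
          exact hd1.trans (Nat.factorial_dvd_factorial (by omega))
    · refine ⟨0, ?_, dvd_zero _⟩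
      have hz0 : F.coeff j = 0 := by rw [hcoeff j, if_neg hjN]
      rw [hder j, hz0]
      simp
  · intro hpm hps hpt z hz hdvd
    have hevalN : (derivative^[N] f).eval 0 = ((F.coeff N : ℤ) : ℝ) := by
      rw [hder N]
      push_cast
      rw [← mul_assoc, inv_mul_cancel₀ hfacN, one_mul]
    have hzeq : z = F.coeff N := by
      have : ((z : ℤ) : ℝ) = ((F.coeff N : ℤ) : ℝ) := by rw [← hz, hevalN]
      exact_mod_cast this
    rw [hzeq, hcoeff N, if_pos le_rfl, Nat.sub_self, hG0] at hdvd
    have hpint : Prime ((p : ℤ)) := Nat.prime_iff_prime_int.mp hp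
    rcases hpint.dvd_mul.mp hdvd with h | h
    · have := hpint.dvd_of_dvd_pow h
      rw [Int.natCast_dvd_natCast] at this
      exact absurd (Nat.le_of_dvd ht this) (by omega)
    · rw [Prime.dvd_finset_prod_iff hpint] at h
      obtain ⟨k, hk, hkd⟩ := h
      have hk1 := (Finset.mem_Icc.mp hk).1
      have hk2 := (Finset.mem_Icc.mp hk).2
      have := hpint.dvd_of_dvd_pow hkd
      rcases hpint.dvd_mul.mp this with h' | h'
      · have := hpint.dvd_of_dvd_pow h'
        rw [Int.natCast_dvd_natCast] at this
        have := Nat.le_of_dvd (by omega) this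
        omega
      · have := hpint.dvd_of_dvd_pow h'
        rw [Int.natCast_dvd_natCast] at this
        exact absurd (Nat.le_of_dvd hs this) (by omega)
end

section
/- Let s, t, m be positive integers, let p be a prime, set r = s/t, and define the polynomial f(x) = t^{4mp+2p−2} · x^{2p−2} · ∏_{k=1}^{m} (x² − k²r²)^{2p} / (2p−2)!. Then for every integer j with 1 ≤ j ≤ m and every natural number k, the value f^{(k)}(j·r) of the k-th derivative of f at j·r is an integer divisible by p. -/
open Polynomial

private lemma iter_deriv_comp_linear {R : Type*} [CommSemiring R] (q : R[X]) (c : R) (k : ℕ) :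
    derivative^[k] (q.comp (C c * X)) = C (c ^ k) * (derivative^[k] q).comp (C c * X) := by
  induction k with
  | zero => simp
  | succ n ih =>
    rw [Function.iterate_succ_apply', ih, derivative_C_mul, derivative_comp,
      Function.iterate_succ_apply']
    simp only [derivative_mul, derivative_C, derivative_X, zero_mul, mul_one, zero_add,
      pow_succ, C_mul]
    ring

theorem niven_poly_deriv_at_jr (s t m : ℕ) (hs : 0 < s) (ht : 0 < t) (hm : 0 < m) (p : ℕ) (hp : p.Prime)
    (r : ℝ) (hr : r = (s : ℝ) / (t : ℝ)) (f : ℝ[X])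
    (hf : f = C ((t : ℝ) ^ (4 * m * p + 2 * p - 2) / ((2 * p - 2).factorial : ℝ)) *
      X ^ (2 * p - 2) * ∏ k ∈ Finset.Icc 1 m, (X ^ 2 - C ((k : ℝ) ^ 2 * r ^ 2)) ^ (2 * p)) :
    ∀ j : ℤ, 1 ≤ j → j ≤ (m : ℤ) → ∀ k : ℕ,
      ∃ z : ℤ, (derivative^[k] f).eval ((j : ℝ) * r) = (z : ℝ) ∧ (p : ℤ) ∣ z := by
  intro j hj1 hjm k
  have hp2 : 2 ≤ p := hp.two_le
  have ht0 : (t : ℝ) ≠ 0 := Nat.cast_ne_zero.mpr ht.ne'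
  set G : ℤ[X] := X ^ (2*p-2) * ∏ i ∈ Finset.Icc 1 m, (X ^ 2 - C ((i:ℤ)^2 * (s:ℤ)^2)) ^ (2*p)
    with hG
  set Q : ℝ[X] := G.map (Int.castRingHom ℝ) with hQ
  have hsr : (s : ℝ) = r * t := by rw [hr]; field_simp
  -- f in terms of Q
  have hfQ : f = C (((2*p-2).factorial : ℝ))⁻¹ * Q.comp (C (t:ℝ) * X) := by
    have hQ' : Q = X ^ (2*p-2) *
        ∏ i ∈ Finset.Icc 1 m, (X ^ 2 - C ((i:ℝ)^2 * (s:ℝ)^2)) ^ (2*p) := by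
      rw [hQ, hG]
      simp only [Polynomial.map_mul, Polynomial.map_pow, Polynomial.map_prod,
        Polynomial.map_sub, map_X, map_C]
      norm_num
    rw [hQ', hf]
    simp only [mul_comp, pow_comp, prod_comp, sub_comp, X_comp, C_comp]
    have hfac : ∀ i : ℕ, ((C (t:ℝ) * X)^2 - C ((i:ℝ)^2 * (s:ℝ)^2)) ^ (2*p)
        = C ((t:ℝ)^(4*p)) * (X^2 - C ((i:ℝ)^2 * r^2)) ^ (2*p) := by
      intro i
      have h1 : (C (t:ℝ) * X)^2 - C ((i:ℝ)^2 * (s:ℝ)^2)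
          = C ((t:ℝ)^2) * (X^2 - C ((i:ℝ)^2 * r^2)) := by
        rw [hsr]
        simp only [mul_pow, C_mul, C_pow]
        ring
      rw [h1, mul_pow, ← C_pow, ← pow_mul, show 2*(2*p) = 4*p from by ring]
    rw [Finset.prod_congr rfl fun i _ => hfac i, Finset.prod_mul_distrib,
      Finset.prod_const, Nat.card_Icc, ← C_pow, ← pow_mul, Nat.add_sub_cancel,
      mul_pow, ← C_pow]
    rw [div_eq_mul_inv, C_mul, show 4*m*p = 4*p*m from by ring,
      show (4*p*m+2*p-2) = (2*p-2) + 4*p*m from by omega, pow_add, C_mul]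
    ring
  set a : ℤ := j * s with ha
  have hta : (t:ℝ) * ((j:ℝ) * r) = (a : ℝ) := by
    rw [hr, ha]; push_cast; field_simp
  -- factor (X - C a)^(2p) out of G
  have hj' : j.toNat ∈ Finset.Icc 1 m := by
    simp only [Finset.mem_Icc]; omega
  have hjt : ((j.toNat : ℤ)) = j := Int.toNat_of_nonneg (by omega)
  have hfac2 : (X - C a) * (X + C a) = X^2 - C ((j.toNat:ℤ)^2 * (s:ℤ)^2) := by
    have h : ((j.toNat:ℤ)^2 * (s:ℤ)^2) = a^2 := by rw [hjt, ha]; ring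
    rw [h, map_pow]; ring
  have hdvd : (X - C a)^(2*p) ∣ G := by
    refine Dvd.dvd.mul_left ?_ _
    calc (X - C a)^(2*p) ∣ (X^2 - C ((j.toNat:ℤ)^2 * (s:ℤ)^2))^(2*p) :=
          pow_dvd_pow_of_dvd ⟨X + C a, hfac2.symm⟩ _
      _ ∣ ∏ i ∈ Finset.Icc 1 m, (X ^ 2 - C ((i:ℤ)^2 * (s:ℤ)^2)) ^ (2*p) :=
          Finset.dvd_prod_of_mem (fun i : ℕ => (X ^ 2 - C ((i:ℤ)^2 * (s:ℤ)^2)) ^ (2*p)) hj'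
  obtain ⟨H, hH⟩ := hdvd
  -- eval of iterated derivative of G at a
  have key : (derivative^[k] G).eval a
      = (k.factorial : ℤ) * (if 2*p ≤ k then (taylor a H).coeff (k - 2*p) else 0) := by
    have h1 : derivative^[k] G = k.factorial • hasseDeriv k G := by
      rw [← factorial_smul_hasseDeriv]; rfl
    have h2 : taylor a G = X ^ (2*p) * taylor a H := by
      rw [hH, taylor_mul]
      congr 1
      simp [taylor_apply, pow_comp, sub_comp]
    rw [h1, eval_smul, ← taylor_coeff, h2, mul_comm (X ^ (2*p)), coeff_mul_X_pow']
    simp [nsmul_eq_mul]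
  -- value of the derivative of f at j*r
  have hval : (derivative^[k] f).eval ((j:ℝ)*r)
      = (((2*p-2).factorial : ℝ))⁻¹ * ((t:ℝ)^k * (((derivative^[k] G).eval a : ℤ) : ℝ)) := by
    rw [hfQ, iterate_derivative_C_mul, iter_deriv_comp_linear, eval_mul, eval_C, eval_mul,
      eval_C, eval_comp, eval_mul, eval_C, eval_X, hta, hQ, iterate_derivative_map,
      eval_intCast_map]
    simp [mul_assoc]
  by_cases hk : 2*p ≤ k
  · -- main case
    have hdvd2 : p * (2*p-2).factorial ∣ k.factorial := by
      have hf2p : (2*p).factorial = (2*p) * ((2*p-1) * (2*p-2).factorial) := by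
        have h1 : 2*p = (2*p-1)+1 := by omega
        have h2 : 2*p-1 = (2*p-2)+1 := by omega
        rw [h1, Nat.factorial_succ, h2, Nat.factorial_succ, ← h2, ← h1]
      refine dvd_trans ⟨2*(2*p-1), ?_⟩ (Nat.factorial_dvd_factorial hk)
      rw [hf2p]; ring
    obtain ⟨c, hc⟩ := hdvd2
    set b : ℤ := (taylor a H).coeff (k - 2*p) with hb
    refine ⟨(t:ℤ)^k * ((p:ℤ) * c * b), ?_, ⟨(t:ℤ)^k * (c * b), by ring⟩⟩
    rw [hval, key, if_pos hk, hc]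
    have hne : (((2*p-2).factorial : ℝ)) ≠ 0 := Nat.cast_ne_zero.mpr (Nat.factorial_ne_zero _)
    push_cast
    field_simp
  · refine ⟨0, ?_, dvd_zero _⟩
    rw [hval, key, if_neg hk]
    simp
end
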